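/- Let i ≥ 1 be an integer and suppose a sequence (b_n)_{n≥1} of reals satisfies b_i = i/(2i+1) − ∑_{ℓ=0}^{i−2} b_{ℓ+1}·∏_{j=ℓ+2}^{i} j/(2j+1) for all i ≥ 1 (with the empty sum equal to 0). Then b_i = i²/(4i²−1) for all i ≥ 1. -/

import Mathlib

open Finset

/-- If a real sequence `(b_n)` satisfies, for all `i ≥ 1`,
`b_i = i/(2i+1) − ∑_{ℓ=0}^{i−2} b_{ℓ+1}·∏_{j=ℓ+2}^{i} j/(2j+1)` (empty sum `= 0`),
then `b_i = i²/(4i²−1)` for all `i ≥ 1`. -/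
theorem stmt_19 (b : ℕ → ℝ)
    (hrec : ∀ i : ℕ, 1 ≤ i →
      b i = (i : ℝ) / (2 * (i : ℝ) + 1) -
        ∑ ℓ ∈ Finset.range (i - 1),
          b (ℓ + 1) * ∏ j ∈ Finset.Icc (ℓ + 2) i, (j : ℝ) / (2 * j + 1)) :
    ∀ i : ℕ, 1 ≤ i → b i = (i : ℝ) ^ 2 / (4 * (i : ℝ) ^ 2 - 1) := by
  intro i hi
  induction i, hi using Nat.le_induction with
  | base =>
    have h := hrec 1 le_rfl
    simp at h
    rw [h]; norm_num
  | succ n hn ih =>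
    have h1 := hrec n hn
    have h2 := hrec (n + 1) (by omega)
    have hn' : n + 1 - 1 = (n - 1) + 1 := by omega
    rw [hn', Finset.sum_range_succ] at h2
    have hsum : ∀ ℓ ∈ Finset.range (n - 1),
        b (ℓ + 1) * ∏ j ∈ Finset.Icc (ℓ + 2) (n + 1), (j : ℝ) / (2 * j + 1)
        = (b (ℓ + 1) * ∏ j ∈ Finset.Icc (ℓ + 2) n, (j : ℝ) / (2 * j + 1)) *
            ((n + 1 : ℝ) / (2 * (n + 1) + 1)) := by
      intro ℓ hℓ
      rw [Finset.mem_range] at hℓ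
      rw [Finset.prod_Icc_succ_top (by omega)]
      push_cast
      ring
    rw [Finset.sum_congr rfl hsum, ← Finset.sum_mul] at h2
    have hlast : n - 1 + 1 = n := by omega
    have hIcc : Finset.Icc (n - 1 + 2) (n + 1) = {n + 1} := by
      have : n - 1 + 2 = n + 1 := by omega
      rw [this, Finset.Icc_self]
    rw [hlast, hIcc, Finset.prod_singleton] at h2
    have hS : ∑ ℓ ∈ Finset.range (n - 1),
        b (ℓ + 1) * ∏ j ∈ Finset.Icc (ℓ + 2) n, (j : ℝ) / (2 * j + 1)
        = (n : ℝ) / (2 * n + 1) - b n := by linarith [h1]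
    rw [hS] at h2
    rw [h2]
    have h1' : (0:ℝ) < 2 * (n:ℝ) + 1 := by positivity
    have h2' : (0:ℝ) < 2 * ((n:ℝ) + 1) + 1 := by positivity
    have h3' : (4:ℝ) * ((n:ℝ) + 1) ^ 2 - 1 ≠ 0 := by nlinarith [sq_nonneg ((n:ℝ))]
    push_cast
    rw [eq_div_iff h3']
    field_simp
    ring
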